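/- Let r ≥ 2 be an integer radix. Let f : ℝ → ℝ be Lipschitz continuous with constant L < 1 (contractive), with fixed point x* = f(x*) satisfying |x*| < 1, and let (x_k)_{k∈ℕ} be iterates with x_{k+1} = f(x_k) for all k. Then for every number of digits D ≥ 1 there exists an index k̂ and a choice of symmetric maximally redundant signed-digit radix-r representations of the iterates from index k̂ onward in which the first D digits are stable: there exist digit sequences d^{(k)} : ℕ → ℤ for each k ≥ k̂ with |d^{(k)}_i| ≤ r − 1 for all i, x_k = Σ_{i=0}^∞ d^{(k)}_i · r^{-(i+1)}, and d^{(k)}_i = d^{(k̂)}_i for all i < D and all k ≥ k̂. -/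

import Mathlib

open Finset Filter

/-- One step of the digit-extraction machine: round `r*y` and clamp into `[-(r-1), r-1]`. -/
noncomputable def sdStep (r : ℕ) (y : ℝ) : ℤ :=
  max (-(r : ℤ) + 1) (min ((r : ℤ) - 1) (round ((r : ℝ) * y)))

/-- The residual state of the machine. -/
noncomputable def sdState (r : ℕ) (y : ℝ) : ℕ → ℝ
  | 0 => y
  | n + 1 => (r : ℝ) * sdState r y n - (sdStep r (sdState r y n) : ℝ)

/-- The digits produced by the machine. -/
noncomputable def sdDig (r : ℕ) (y : ℝ) (i : ℕ) : ℤ := sdStep r (sdState r y i)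

lemma sdStep_abs (r : ℕ) (hr : 2 ≤ r) (y : ℝ) : |sdStep r y| ≤ (r : ℤ) - 1 := by
  have h1 : (2 : ℤ) ≤ r := by exact_mod_cast hr
  rw [abs_le]
  constructor
  · have := le_max_left (-(r : ℤ) + 1) (min ((r : ℤ) - 1) (round ((r : ℝ) * y)))
    unfold sdStep; omega
  · unfold sdStep
    apply max_le (by omega)
    exact min_le_left _ _

lemma sdStep_err (r : ℕ) (hr : 2 ≤ r) (y : ℝ) (hy : |y| ≤ 1) :
    |(r : ℝ) * y - (sdStep r y : ℝ)| ≤ 1 := by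
  have hr2 : (2 : ℝ) ≤ r := by exact_mod_cast hr
  have hround := abs_sub_round ((r : ℝ) * y)
  have ht : |(r : ℝ) * y| ≤ r := by
    rw [abs_mul, abs_of_nonneg (by linarith : (0:ℝ) ≤ (r:ℝ))]
    nlinarith [abs_nonneg y]
  rw [abs_le] at hround hy ht ⊢
  set m := round ((r : ℝ) * y) with hm
  unfold sdStep
  rw [← hm]
  by_cases h1 : m ≤ (r : ℤ) - 1
  · by_cases h2 : -(r : ℤ) + 1 ≤ m
    · rw [min_eq_right h1, max_eq_right h2]
      constructor <;> linarith [hround.1, hround.2]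
    · push_neg at h2
      have h2' : (m : ℝ) ≤ -(r : ℝ) := by exact_mod_cast (by omega : m ≤ -(r:ℤ))
      rw [min_eq_right h1, max_eq_left (by omega : m ≤ -(r:ℤ)+1)]
      push_cast
      constructor <;> linarith [hround.1, hround.2, ht.1, ht.2]
  · push_neg at h1
    have h1' : ((r : ℝ)) ≤ (m : ℝ) := by exact_mod_cast (by omega : (r:ℤ) ≤ m)
    rw [min_eq_left (by omega : (r:ℤ) - 1 ≤ m), max_eq_right (by omega : -(r:ℤ)+1 ≤ (r:ℤ)-1)]
    push_cast
    constructor <;> linarith [hround.1, hround.2, ht.1, ht.2]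

lemma sdStep_err_lt (r : ℕ) (hr : 2 ≤ r) (y : ℝ) (hy : |y| < 1) :
    |(r : ℝ) * y - (sdStep r y : ℝ)| < 1 := by
  have hr2 : (2 : ℝ) ≤ r := by exact_mod_cast hr
  have hround := abs_sub_round ((r : ℝ) * y)
  rw [abs_le] at hround
  rw [abs_lt] at hy ⊢
  have ht : |(r : ℝ) * y| < r := by
    rw [abs_mul, abs_of_nonneg (by linarith : (0:ℝ) ≤ (r:ℝ))]
    have h1 : |y| < 1 := abs_lt.mpr hy
    nlinarith [abs_nonneg y]
  rw [abs_lt] at ht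
  set m := round ((r : ℝ) * y) with hm
  unfold sdStep
  rw [← hm]
  by_cases h1 : m ≤ (r : ℤ) - 1
  · by_cases h2 : -(r : ℤ) + 1 ≤ m
    · rw [min_eq_right h1, max_eq_right h2]
      constructor <;> linarith [hround.1, hround.2]
    · push_neg at h2
      have h2' : (m : ℝ) ≤ -(r : ℝ) := by exact_mod_cast (by omega : m ≤ -(r:ℤ))
      rw [min_eq_right h1, max_eq_left (by omega : m ≤ -(r:ℤ)+1)]
      push_cast
      constructor <;> linarith [hround.1, hround.2, ht.1, ht.2]
  · push_neg at h1
    have h1' : ((r : ℝ)) ≤ (m : ℝ) := by exact_mod_cast (by omega : (r:ℤ) ≤ m)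
    rw [min_eq_left (by omega : (r:ℤ) - 1 ≤ m), max_eq_right (by omega : -(r:ℤ)+1 ≤ (r:ℤ)-1)]
    push_cast
    constructor <;> linarith [hround.1, hround.2, ht.1, ht.2]

lemma sdState_abs (r : ℕ) (hr : 2 ≤ r) (y : ℝ) (hy : |y| ≤ 1) :
    ∀ n, |sdState r y n| ≤ 1 := by
  intro n
  induction n with
  | zero => exact hy
  | succ n ih => exact sdStep_err r hr _ ih

lemma sdState_abs_lt (r : ℕ) (hr : 2 ≤ r) (y : ℝ) (hy : |y| < 1) :
    ∀ n, |sdState r y n| < 1 := by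
  intro n
  induction n with
  | zero => exact hy
  | succ n ih => exact sdStep_err_lt r hr _ ih

lemma sdDig_abs (r : ℕ) (hr : 2 ≤ r) (y : ℝ) (i : ℕ) : |sdDig r y i| ≤ (r : ℤ) - 1 :=
  sdStep_abs r hr _

lemma sdPartial (r : ℕ) (hr : 2 ≤ r) (y : ℝ) :
    ∀ n, y - ∑ i ∈ Finset.range n, (sdDig r y i : ℝ) * (r : ℝ) ^ (-(i + 1 : ℤ))
      = (r : ℝ) ^ (-(n : ℤ)) * sdState r y n := by
  have hr0 : (r : ℝ) ≠ 0 := by positivity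
  intro n
  induction n with
  | zero => simp [sdState]
  | succ n ih =>
    have key : (r : ℝ) ^ (-((n:ℤ) + 1)) * (r : ℝ) = (r : ℝ) ^ (-(n : ℤ)) := by
      rw [← zpow_add_one₀ hr0]
      norm_num
    have hst : sdState r y (n+1) = (r : ℝ) * sdState r y n - (sdDig r y n : ℝ) := rfl
    have e1 : (-((n+1:ℕ):ℤ)) = -((n:ℤ)+1) := by push_cast; ring
    rw [Finset.sum_range_succ, hst, e1]
    linear_combination ih - sdState r y n * key

lemma sdPow_eq (r : ℕ) (i : ℕ) : (r:ℝ) ^ (-((i:ℤ) + 1)) = ((r:ℝ)⁻¹) ^ (i + 1) := by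
  rw [show (-((i:ℤ)+1)) = -((i+1 : ℕ) : ℤ) by push_cast; ring, zpow_neg, zpow_natCast, inv_pow]

lemma sdPow_nat (r : ℕ) (n : ℕ) : (r:ℝ) ^ (-(n:ℤ)) = ((r:ℝ)⁻¹) ^ n := by
  rw [zpow_neg, zpow_natCast, inv_pow]

lemma hasSum_digits (r : ℕ) (hr : 2 ≤ r) (g : ℕ → ℤ) (hg : ∀ i, |g i| ≤ (r:ℤ) - 1)
    (y : ℝ) (D : ℕ)
    (hb : ∀ n, D ≤ n →
      |y - ∑ i ∈ Finset.range n, (g i : ℝ) * (r:ℝ) ^ (-(i + 1 : ℤ))| ≤ (r:ℝ) ^ (-(n:ℤ))) :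
    HasSum (fun i : ℕ => (g i : ℝ) * (r:ℝ) ^ (-(i + 1 : ℤ))) y := by
  have hr2 : (2:ℝ) ≤ r := by exact_mod_cast hr
  have hr0 : (0:ℝ) < r := by linarith
  have hq0 : (0:ℝ) ≤ (r:ℝ)⁻¹ := by positivity
  have hq1 : (r:ℝ)⁻¹ < 1 := by
    rw [inv_lt_one_iff₀]; right; linarith
  have hgeo : Summable (fun i : ℕ => ((r:ℝ) - 1) * ((r:ℝ)⁻¹) ^ i) :=
    (summable_geometric_of_lt_one hq0 hq1).mul_left _
  have hgeo' : Summable (fun i : ℕ => ((r:ℝ) - 1) * ((r:ℝ)⁻¹) ^ (i + 1)) :=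
    (summable_nat_add_iff (f := fun i : ℕ => ((r:ℝ) - 1) * ((r:ℝ)⁻¹) ^ i) 1).mpr hgeo
  have hsum : Summable (fun i : ℕ => (g i : ℝ) * (r:ℝ) ^ (-(i + 1 : ℤ))) := by
    apply Summable.of_norm_bounded hgeo'
    · intro i
      rw [Real.norm_eq_abs, abs_mul, sdPow_eq, abs_of_nonneg (by positivity : (0:ℝ) ≤ ((r:ℝ)⁻¹)^(i+1))]
      apply mul_le_mul_of_nonneg_right _ (by positivity)
      have := hg i
      rw [← Int.cast_abs]
      exact_mod_cast this
  rw [hsum.hasSum_iff_tendsto_nat, tendsto_iff_dist_tendsto_zero]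
  have htend : Tendsto (fun n : ℕ => (r:ℝ) ^ (-(n:ℤ))) atTop (nhds 0) := by
    have heq : (fun n : ℕ => (r:ℝ) ^ (-(n:ℤ))) = fun n : ℕ => ((r:ℝ)⁻¹) ^ n :=
      funext (sdPow_nat r)
    rw [heq]
    exact tendsto_pow_atTop_nhds_zero_of_lt_one hq0 hq1
  apply squeeze_zero' (Eventually.of_forall fun n => dist_nonneg) _ htend
  filter_upwards [eventually_ge_atTop D] with n hn
  rw [Real.dist_eq, abs_sub_comm]
  exact hb n hn

/-- Theorem 3 of the paper: for a fixed-point iteration of a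
contractive function `f : ℝ → ℝ` (Lipschitz with constant `L < 1`) whose fixed
point `xs` satisfies `|xs| < 1`, for every number of digits `D ≥ 1` there is an
index `k̂` from which the first `D` digits of the iterates are stable in some
choice of symmetric maximally redundant signed-digit radix-`r` representations. -/
theorem contractive_iteration_digit_stability
    (r : ℕ) (hr : 2 ≤ r)
    (f : ℝ → ℝ) (L : ℝ) (hL : L < 1)
    (hLip : ∀ a b : ℝ, |f a - f b| ≤ L * |a - b|)
    (xs : ℝ) (hfix : f xs = xs) (hxs : |xs| < 1)
    (x : ℕ → ℝ) (hx : ∀ k : ℕ, x (k + 1) = f (x k)) :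
    ∀ D : ℕ, 1 ≤ D →
      ∃ khat : ℕ, ∃ d : ℕ → ℕ → ℤ, ∀ k : ℕ, khat ≤ k →
        (∀ i, |d k i| ≤ (r : ℤ) - 1) ∧
        HasSum (fun i : ℕ => (d k i : ℝ) * (r : ℝ) ^ (-(i + 1 : ℤ))) (x k) ∧
        (∀ i < D, d k i = d khat i) := by
  intro D hD
  have hr2 : (2:ℝ) ≤ r := by exact_mod_cast hr
  have hr0 : (0:ℝ) < r := by linarith
  have hrne : (r:ℝ) ≠ 0 := ne_of_gt hr0
  have hL0 : 0 ≤ L := by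
    have h := hLip 0 1
    norm_num at h
    exact le_trans (abs_nonneg _) h
  -- convergence of the iterates
  have hiter : ∀ k, |x k - xs| ≤ L ^ k * |x 0 - xs| := by
    intro k
    induction k with
    | zero => simp
    | succ k ih =>
      rw [hx k]
      calc |f (x k) - xs| = |f (x k) - f xs| := by rw [hfix]
        _ ≤ L * |x k - xs| := hLip _ _
        _ ≤ L * (L ^ k * |x 0 - xs|) := mul_le_mul_of_nonneg_left ih hL0
        _ = L ^ (k + 1) * |x 0 - xs| := by ring
  have htends : Tendsto (fun k => |x k - xs|) atTop (nhds 0) := by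
    apply squeeze_zero (fun k => abs_nonneg _) hiter
    have h := (tendsto_pow_atTop_nhds_zero_of_lt_one hL0 hL).mul_const (|x 0 - xs|)
    simpa using h
  -- digits of the fixed point
  set e : ℕ → ℤ := sdDig r xs with he
  set P : ℝ := ∑ i ∈ Finset.range D, (e i : ℝ) * (r:ℝ) ^ (-(i + 1 : ℤ)) with hP
  have hPxs : xs - P = (r:ℝ) ^ (-(D:ℤ)) * sdState r xs D := sdPartial r hr xs D
  have hPlt : |xs - P| < (r:ℝ) ^ (-(D:ℤ)) := by
    rw [hPxs, abs_mul, abs_of_nonneg (by positivity : (0:ℝ) ≤ (r:ℝ) ^ (-(D:ℤ)))]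
    calc (r:ℝ) ^ (-(D:ℤ)) * |sdState r xs D|
        < (r:ℝ) ^ (-(D:ℤ)) * 1 :=
          mul_lt_mul_of_pos_left (sdState_abs_lt r hr xs hxs D) (by positivity)
      _ = (r:ℝ) ^ (-(D:ℤ)) := mul_one _
  set ε : ℝ := (r:ℝ) ^ (-(D:ℤ)) - |xs - P| with hε
  have hε0 : 0 < ε := sub_pos.mpr hPlt
  obtain ⟨khat, hkhat⟩ := eventually_atTop.mp (htends.eventually (gt_mem_nhds hε0))
  -- the digit sequences
  set d : ℕ → ℕ → ℤ := fun k i =>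
    if i < D then e i else sdDig r ((r:ℝ) ^ (D:ℤ) * (x k - P)) (i - D) with hd
  refine ⟨khat, d, ?_⟩
  intro k hk
  set z : ℝ := (r:ℝ) ^ (D:ℤ) * (x k - P) with hz
  have hzabs : |z| ≤ 1 := by
    have h1 : |x k - xs| < ε := hkhat k hk
    have h2 : |x k - P| ≤ (r:ℝ) ^ (-(D:ℤ)) := by
      calc |x k - P| ≤ |x k - xs| + |xs - P| := abs_sub_le _ _ _
        _ ≤ (r:ℝ) ^ (-(D:ℤ)) := by rw [hε] at h1; linarith
    rw [hz, abs_mul, abs_of_nonneg (by positivity : (0:ℝ) ≤ (r:ℝ) ^ (D:ℤ))]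
    calc (r:ℝ) ^ (D:ℤ) * |x k - P| ≤ (r:ℝ) ^ (D:ℤ) * (r:ℝ) ^ (-(D:ℤ)) :=
          mul_le_mul_of_nonneg_left h2 (by positivity)
      _ = 1 := by rw [← zpow_add₀ hrne]; norm_num
  have hdz : ∀ i, d k i = if i < D then e i else sdDig r z (i - D) := fun i => rfl
  have hdabs : ∀ i, |d k i| ≤ (r:ℤ) - 1 := by
    intro i
    rw [hdz i]
    by_cases hi : i < D
    · rw [if_pos hi]; exact sdDig_abs r hr xs i
    · rw [if_neg hi]; exact sdDig_abs r hr z (i - D)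
  refine ⟨hdabs, ?_, ?_⟩
  · -- the HasSum statement
    apply hasSum_digits r hr _ hdabs (x k) D
    intro n hn
    obtain ⟨m, rfl⟩ : ∃ m, n = D + m := ⟨n - D, by omega⟩
    rw [Finset.sum_range_add]
    have hxkP : x k - P = (r:ℝ) ^ (-(D:ℤ)) * z := by
      rw [hz, ← mul_assoc, ← zpow_add₀ hrne]
      norm_num
    have hfirst : ∑ i ∈ Finset.range D, (d k i : ℝ) * (r:ℝ) ^ (-(i + 1 : ℤ)) = P := by
      rw [hP]
      apply Finset.sum_congr rfl
      intro i hi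
      rw [hdz i, if_pos (Finset.mem_range.mp hi)]
    have hsecond : ∑ j ∈ Finset.range m, (d k (D + j) : ℝ) * (r:ℝ) ^ (-((D + j : ℕ) + 1 : ℤ))
        = (r:ℝ) ^ (-(D:ℤ)) *
          ∑ j ∈ Finset.range m, (sdDig r z j : ℝ) * (r:ℝ) ^ (-(j + 1 : ℤ)) := by
      rw [Finset.mul_sum]
      apply Finset.sum_congr rfl
      intro j _
      rw [hdz (D + j), if_neg (by omega), show D + j - D = j by omega]
      have hexp : (-((D + j : ℕ) + 1 : ℤ)) = -(D:ℤ) + (-(j + 1 : ℤ)) := by push_cast; ring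
      rw [hexp, zpow_add₀ hrne]
      ring
    rw [hfirst, hsecond]
    have htail : z - ∑ j ∈ Finset.range m, (sdDig r z j : ℝ) * (r:ℝ) ^ (-(j + 1 : ℤ))
        = (r:ℝ) ^ (-(m:ℤ)) * sdState r z m := sdPartial r hr z m
    have hkey : x k - (P + (r:ℝ) ^ (-(D:ℤ)) *
          ∑ j ∈ Finset.range m, (sdDig r z j : ℝ) * (r:ℝ) ^ (-(j + 1 : ℤ)))
        = (r:ℝ) ^ (-(D:ℤ)) * ((r:ℝ) ^ (-(m:ℤ)) * sdState r z m) := by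
      rw [← htail]
      rw [show x k - (P + (r:ℝ) ^ (-(D:ℤ)) * ∑ j ∈ Finset.range m,
            (sdDig r z j : ℝ) * (r:ℝ) ^ (-(j + 1 : ℤ)))
          = (x k - P) - (r:ℝ) ^ (-(D:ℤ)) * ∑ j ∈ Finset.range m,
            (sdDig r z j : ℝ) * (r:ℝ) ^ (-(j + 1 : ℤ)) by ring, hxkP]
      ring
    rw [hkey, abs_mul, abs_mul,
      abs_of_nonneg (by positivity : (0:ℝ) ≤ (r:ℝ) ^ (-(D:ℤ))),
      abs_of_nonneg (by positivity : (0:ℝ) ≤ (r:ℝ) ^ (-(m:ℤ)))]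
    have hstate : |sdState r z m| ≤ 1 := sdState_abs r hr z hzabs m
    calc (r:ℝ) ^ (-(D:ℤ)) * ((r:ℝ) ^ (-(m:ℤ)) * |sdState r z m|)
        ≤ (r:ℝ) ^ (-(D:ℤ)) * ((r:ℝ) ^ (-(m:ℤ)) * 1) := by
          apply mul_le_mul_of_nonneg_left _ (by positivity)
          exact mul_le_mul_of_nonneg_left hstate (by positivity)
      _ = (r:ℝ) ^ (-((D + m : ℕ) : ℤ)) := by
          rw [mul_one, ← zpow_add₀ hrne]
          congr 1
          push_cast
          ring
  · intro i hi
    rw [hdz i, if_pos hi]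
    have : d khat i = if i < D then e i else sdDig r ((r:ℝ) ^ (D:ℤ) * (x khat - P)) (i - D) := rfl
    rw [this, if_pos hi]
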